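/- arXiv:1911.09080 — 4 statements merged into one kernel-verified Lean document; each statement's English description precedes it below -/
import Mathlib

section
/- Let A be an n×n Hermitian matrix with eigenvalues λ_1(A),…,λ_n(A), and let M be the (n−1)×(n−1) matrix obtained by deleting the first row and first column of A, with eigenvalues λ_1(M),…,λ_{n−1}(M). Let v_i denote the first coordinate of a unit-norm eigenvector of A associated to λ_i(A). Then |v_i|² · ∏_{k≠i} (λ_i(A) − λ_k(A)) = ∏_{k=1}^{n−1} (λ_i(A) − λ_k(M)). -/
open Matrix Finset ComplexConjugate

section aux
variable {m : Type*} [Fintype m] [DecidableEq m] {H : Matrix m m ℂ}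

lemma decomp_aux (hH : H.IsHermitian) (x : ℝ) :
    (x : ℂ) • (1 : Matrix m m ℂ) - H =
      (hH.eigenvectorUnitary : Matrix m m ℂ) *
        ((x : ℂ) • 1 - diagonal (RCLike.ofReal ∘ hH.eigenvalues)) *
        (star (hH.eigenvectorUnitary : Matrix m m ℂ)) := by
  set U := (hH.eigenvectorUnitary : Matrix m m ℂ)
  have hU : U * star U = 1 := Unitary.mul_star_self_of_mem hH.eigenvectorUnitary.2
  rw [Matrix.mul_sub, Matrix.sub_mul, mul_smul_comm, mul_one, smul_mul_assoc, hU]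
  conv_lhs => rw [hH.spectral_theorem, Unitary.conjStarAlgAut_apply]

lemma det_aux (hH : H.IsHermitian) (x : ℝ) :
    ((x : ℂ) • (1 : Matrix m m ℂ) - H).det = ∏ k, ((x : ℂ) - hH.eigenvalues k) := by
  set U := (hH.eigenvectorUnitary : Matrix m m ℂ)
  have hU' : star U * U = 1 := Unitary.star_mul_self_of_mem hH.eigenvectorUnitary.2
  rw [decomp_aux hH x, det_mul, det_mul, mul_comm, ← mul_assoc, ← det_mul, hU', det_one, one_mul,
    smul_one_eq_diagonal, diagonal_sub, det_diagonal]
  rfl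

lemma adj_aux (hH : H.IsHermitian) (x : ℝ) :
    ((x : ℂ) • (1 : Matrix m m ℂ) - H).adjugate =
      (hH.eigenvectorUnitary : Matrix m m ℂ) *
        diagonal (fun k => ∏ j ∈ univ.erase k, ((x : ℂ) - hH.eigenvalues j)) *
        (star (hH.eigenvectorUnitary : Matrix m m ℂ)) := by
  set U := (hH.eigenvectorUnitary : Matrix m m ℂ) with hUdef
  have hU : U * star U = 1 := Unitary.mul_star_self_of_mem hH.eigenvectorUnitary.2
  have hU' : star U * U = 1 := Unitary.star_mul_self_of_mem hH.eigenvectorUnitary.2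
  have adjU : adjugate U = U.det • star U := by
    calc adjugate U = adjugate U * (U * star U) := by rw [hU, mul_one]
    _ = (adjugate U * U) * star U := by rw [mul_assoc]
    _ = U.det • star U := by rw [adjugate_mul, smul_mul_assoc, one_mul]
  have adjU' : adjugate (star U) = (star U).det • U := by
    calc adjugate (star U) = adjugate (star U) * (star U * U) := by rw [hU', mul_one]
    _ = (adjugate (star U) * star U) * U := by rw [mul_assoc]
    _ = (star U).det • U := by rw [adjugate_mul, smul_mul_assoc, one_mul]
  have hdet : (star U).det * U.det = 1 := by rw [← det_mul, hU', det_one]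
  have hmid : (x : ℂ) • (1 : Matrix m m ℂ) - diagonal (RCLike.ofReal ∘ hH.eigenvalues)
      = diagonal (fun k => (x : ℂ) - hH.eigenvalues k) := by
    rw [smul_one_eq_diagonal, diagonal_sub]
    rfl
  rw [decomp_aux hH x, adjugate_mul_distrib, adjugate_mul_distrib, adjU, adjU',
    hmid, adjugate_diagonal]
  rw [smul_mul_assoc, mul_smul_comm, mul_smul_comm, smul_smul, hdet, one_smul, mul_assoc]
end aux

theorem stmt_0 (n : ℕ) (A : Matrix (Fin (n + 1)) (Fin (n + 1)) ℂ)
    (hA : A.IsHermitian) (i : Fin (n + 1))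
    (v : Fin (n + 1) → ℂ)
    (hnorm : ∑ j, ‖v j‖ ^ 2 = 1)
    (hv : A.mulVec v = (hA.eigenvalues i : ℂ) • v) :
    ‖v 0‖ ^ 2 * ∏ k ∈ Finset.univ.erase i, (hA.eigenvalues i - hA.eigenvalues k)
      = ∏ k : Fin n,
          (hA.eigenvalues i - (hA.submatrix Fin.succ).eigenvalues k) := by
  classical
  set ν : Fin (n + 1) → ℝ := hA.eigenvalues with hν
  set U := (hA.eigenvectorUnitary : Matrix (Fin (n + 1)) (Fin (n + 1)) ℂ) with hUdef
  have hU : U * star U = 1 := Unitary.mul_star_self_of_mem hA.eigenvectorUnitary.2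
  have hU' : star U * U = 1 := Unitary.star_mul_self_of_mem hA.eigenvectorUnitary.2
  set B : Matrix (Fin (n + 1)) (Fin (n + 1)) ℂ := (ν i : ℂ) • 1 - A with hB
  set p : Fin (n + 1) → ℂ := fun k => ∏ j ∈ univ.erase k, ((ν i : ℂ) - ν j) with hp
  -- reduce to a complex identity
  apply Complex.ofReal_injective
  push_cast
  -- RHS as det of submatrix of B
  have hsub : B.submatrix Fin.succ Fin.succ
      = (ν i : ℂ) • 1 - A.submatrix Fin.succ Fin.succ := by
    ext j k
    by_cases h : j = k <;>
      simp [hB, Matrix.sub_apply, Matrix.smul_apply, Matrix.one_apply, Fin.succ_inj, h]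
  have hRHS : (∏ k : Fin n, ((ν i : ℂ) - (hA.submatrix Fin.succ).eigenvalues k))
      = B.adjugate 0 0 := by
    rw [adjugate_fin_succ_eq_det_submatrix, Fin.succAbove_zero, hsub,
      det_aux (hA.submatrix Fin.succ) (ν i)]
    simp
  rw [hRHS, adj_aux hA (ν i)]
  -- compute the (0,0) entry
  have hentry : (U * diagonal p * star U) 0 0 = ∑ k, U 0 k * p k * conj (U 0 k) := by
    rw [mul_apply]
    refine Finset.sum_congr rfl fun k _ => ?_
    rw [mul_diagonal]
    rfl
  have hterm : ∀ k, k ≠ i → U 0 k * p k * conj (U 0 k) = 0 := by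
    intro k hk
    have : p k = 0 := by
      refine Finset.prod_eq_zero (Finset.mem_erase.2 ⟨Ne.symm hk, Finset.mem_univ i⟩) ?_
      simp
    rw [this, mul_zero, zero_mul]
  have hsum : (U * diagonal p * star U) 0 0 = U 0 i * p i * conj (U 0 i) := by
    rw [hentry, Fintype.sum_eq_single i hterm]
  rw [hsum]
  -- now show ‖v 0‖² * p i = U 0 i * p i * conj (U 0 i)
  rcases eq_or_ne (p i) 0 with hpi | hpi
  · have h1 : (∏ x ∈ univ.erase i, ((ν i : ℂ) - ν x)) = 0 := hpi
    rw [h1, hpi]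
    ring
  · -- eigenvalue is simple
    have hsimple : ∀ k, k ≠ i → ν k ≠ ν i := by
      intro k hk hcontra
      apply hpi
      refine Finset.prod_eq_zero (Finset.mem_erase.2 ⟨hk, Finset.mem_univ k⟩) ?_
      rw [hcontra, sub_self]
    set c : Fin (n + 1) → ℂ := star U *ᵥ v with hc
    have hUc : U *ᵥ c = v := by rw [hc, mulVec_mulVec, hU, one_mulVec]
    have hUA : star U * A = diagonal (RCLike.ofReal ∘ ν) * star U := by
      conv_lhs => rw [hA.spectral_theorem, Unitary.conjStarAlgAut_apply]
      rw [← mul_assoc, ← mul_assoc, hU', one_mul]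
    have hDc : ∀ k, (ν k : ℂ) * c k = (ν i : ℂ) * c k := by
      intro k
      have h1 : star U *ᵥ (A *ᵥ v) = diagonal (RCLike.ofReal ∘ ν) *ᵥ c := by
        rw [mulVec_mulVec, hUA, ← mulVec_mulVec, hc]
      have h2 : star U *ᵥ (A *ᵥ v) = (ν i : ℂ) • c := by
        rw [hv, mulVec_smul, hc]
      have := congrFun (h1.symm.trans h2) k
      simpa [mulVec_diagonal] using this
    have hck : ∀ k, k ≠ i → c k = 0 := by
      intro k hk
      have h2 : ((ν k : ℂ) - ν i) * c k = 0 := by linear_combination hDc k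
      rcases mul_eq_zero.mp h2 with h | h
      · exact absurd (Complex.ofReal_injective (sub_eq_zero.mp h)) (hsimple k hk)
      · exact h
    have hvj : ∀ j, v j = U j i * c i := by
      intro j
      rw [← hUc]
      rw [mulVec, dotProduct]
      rw [Fintype.sum_eq_single i fun k hk => by rw [hck k hk, mul_zero]]
    -- column norm of U is 1
    have hcol : ∑ j, (‖U j i‖ ^ 2 : ℂ) = 1 := by
      have := congrFun (congrFun hU' i) i
      rw [mul_apply] at this
      simp only [one_apply_eq] at this
      rw [← this]
      refine Finset.sum_congr rfl fun j _ => ?_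
      rw [star_apply, RCLike.star_def, mul_comm, RCLike.mul_conj]
      norm_cast
    -- ‖c i‖² = 1
    have hci : (‖c i‖ ^ 2 : ℂ) = 1 := by
      have h1 : (1 : ℂ) = ∑ j, (‖v j‖ ^ 2 : ℂ) := by exact_mod_cast congrArg Complex.ofReal hnorm.symm
      rw [show ∑ j, (‖v j‖ ^ 2 : ℂ) = ∑ j, (‖U j i‖ ^ 2 : ℂ) * ‖c i‖ ^ 2 by
        refine Finset.sum_congr rfl fun j _ => ?_
        rw [hvj j, norm_mul]
        push_cast
        ring] at h1
      rw [← Finset.sum_mul, hcol, one_mul] at h1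
      exact h1.symm
    have hv0 : (‖v 0‖ ^ 2 : ℂ) = U 0 i * conj (U 0 i) := by
      rw [hvj 0, RCLike.mul_conj, norm_mul]
      push_cast
      calc ((‖U 0 i‖ : ℂ) * ‖c i‖) ^ 2 = (‖U 0 i‖ : ℂ) ^ 2 * (‖c i‖ : ℂ) ^ 2 := by ring
      _ = (‖U 0 i‖ : ℂ) ^ 2 := by rw [show ((‖c i‖ : ℂ)) ^ 2 = 1 by exact_mod_cast hci, mul_one]
    rw [hv0]
    ring
end

section
/- Let A be an n×n Hermitian matrix whose eigenvalue λ_i(A) is simple and is not an eigenvalue of M, the submatrix obtained by deleting the first row and column of A. Then the first coordinate v_i of any normalized eigenvector for λ_i(A) satisfies |v_i|² = ∏_{k=1}^{n−1}(λ_i(A) − λ_k(M)) / ∏_{k≠i}(λ_i(A) − λ_k(A)), and in particular v_i ≠ 0. -/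
open Matrix Finset

private lemma conj_smul_one_sub {m : Type*} [Fintype m] [DecidableEq m]
    (N : Matrix m m ℂ) (hN : N.IsHermitian) (z : ℂ) :
    z • (1 : Matrix m m ℂ) - N
      = (hN.eigenvectorUnitary : Matrix m m ℂ)
          * (z • (1 : Matrix m m ℂ) - diagonal (RCLike.ofReal ∘ hN.eigenvalues))
          * star (hN.eigenvectorUnitary : Matrix m m ℂ) := by
  set U := (hN.eigenvectorUnitary : Matrix m m ℂ)
  have hU : U * star U = 1 := (Matrix.mem_unitaryGroup_iff).mp hN.eigenvectorUnitary.2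
  rw [Matrix.mul_sub, Matrix.sub_mul]
  congr 1
  · rw [Matrix.mul_smul, Matrix.mul_one, Matrix.smul_mul, hU]
  · exact hN.spectral_theorem

private lemma smul_one_sub_diag {m : Type*} [Fintype m] [DecidableEq m]
    (f : m → ℝ) (z : ℂ) :
    z • (1 : Matrix m m ℂ) - diagonal (RCLike.ofReal ∘ f)
      = diagonal (fun k => z - (f k : ℂ)) := by
  ext j k
  rcases eq_or_ne j k with h | h
  · subst h; simp [Matrix.one_apply, Matrix.diagonal_apply]
  · simp [Matrix.one_apply, Matrix.diagonal_apply, h]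

private lemma det_smul_one_sub {m : Type*} [Fintype m] [DecidableEq m]
    (N : Matrix m m ℂ) (hN : N.IsHermitian) (z : ℂ) :
    det (z • (1 : Matrix m m ℂ) - N) = ∏ k, (z - (hN.eigenvalues k : ℂ)) := by
  set U := (hN.eigenvectorUnitary : Matrix m m ℂ)
  have hU : U * star U = 1 := (Matrix.mem_unitaryGroup_iff).mp hN.eigenvectorUnitary.2
  have h1 : det U * det (star U) = 1 := by rw [← det_mul, hU, det_one]
  rw [conj_smul_one_sub N hN z, det_mul, det_mul, smul_one_sub_diag, det_diagonal,
    mul_right_comm, h1, one_mul]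

theorem stmt_6 (n : ℕ) (A : Matrix (Fin (n + 1)) (Fin (n + 1)) ℂ)
    (hA : A.IsHermitian) (i : Fin (n + 1))
    (hsimple : ∀ k, k ≠ i → hA.eigenvalues k ≠ hA.eigenvalues i)
    (hnotM : ∀ k : Fin n, (hA.submatrix Fin.succ).eigenvalues k ≠ hA.eigenvalues i)
    (v : Fin (n + 1) → ℂ)
    (hnorm : ∑ j, ‖v j‖ ^ 2 = 1)
    (hv : A.mulVec v = (hA.eigenvalues i : ℂ) • v) :
    ‖v 0‖ ^ 2
        = (∏ k : Fin n, (hA.eigenvalues i - (hA.submatrix Fin.succ).eigenvalues k))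
          / ∏ k ∈ Finset.univ.erase i, (hA.eigenvalues i - hA.eigenvalues k)
      ∧ v 0 ≠ 0 := by
  set μ := hA.eigenvalues with hμ
  set lam : ℂ := (μ i : ℂ) with hlam
  set U := (hA.eigenvectorUnitary : Matrix (Fin (n+1)) (Fin (n+1)) ℂ) with hUdef
  have hU : U * star U = 1 := (Matrix.mem_unitaryGroup_iff).mp hA.eigenvectorUnitary.2
  have hU' : star U * U = 1 := (Matrix.mem_unitaryGroup_iff').mp hA.eigenvectorUnitary.2
  have hdet1 : det (star U) * det U = 1 := by rw [← det_mul, hU', det_one]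
  set den : ℝ := ∏ k ∈ Finset.univ.erase i, (μ i - μ k) with hden
  set num : ℝ := ∏ k : Fin n, (μ i - (hA.submatrix Fin.succ).eigenvalues k) with hnum
  have hden0 : den ≠ 0 := by
    rw [hden]
    apply Finset.prod_ne_zero_iff.mpr
    intro k hk
    exact sub_ne_zero.mpr fun h => hsimple k (Finset.mem_erase.mp hk).1 h.symm
  have hnum0 : num ≠ 0 := by
    rw [hnum]
    apply Finset.prod_ne_zero_iff.mpr
    intro k _
    exact sub_ne_zero.mpr fun h => hnotM k h.symm
  -- eigenvector analysis: v j = U j i * w i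
  set w : Fin (n+1) → ℂ := (star U) *ᵥ v with hw
  have hcomm : star U * A = diagonal (RCLike.ofReal ∘ μ) * star U := by
    nth_rewrite 1 [hA.spectral_theorem, Unitary.conjStarAlgAut_apply]
    rw [← Matrix.mul_assoc, ← Matrix.mul_assoc, ← hUdef, hU', Matrix.one_mul, ← hμ]
  have hDw : (diagonal (RCLike.ofReal ∘ μ)) *ᵥ w = lam • w := by
    rw [hw, Matrix.mulVec_mulVec, ← hcomm, ← Matrix.mulVec_mulVec, hv, Matrix.mulVec_smul]
  have hwk : ∀ k, k ≠ i → w k = 0 := by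
    intro k hk
    have h1 : (μ k : ℂ) * w k = lam * w k := by
      have := congrFun hDw k
      simpa [Matrix.mulVec_diagonal] using this
    have h2 : ((μ k : ℂ) - lam) ≠ 0 := by
      rw [hlam, ← Complex.ofReal_sub]
      exact_mod_cast sub_ne_zero.mpr (hsimple k hk)
    have h3 := sub_eq_zero.mpr h1
    rw [← sub_mul] at h3
    exact (mul_eq_zero.mp h3).resolve_left h2
  have hvj : ∀ j, v j = U j i * w i := by
    intro j
    have hvU : U *ᵥ w = v := by
      rw [hw, Matrix.mulVec_mulVec, hU, Matrix.one_mulVec]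
    have h2 : ∑ k, U j k * w k = U j i * w i :=
      Finset.sum_eq_single_of_mem (f := fun k => U j k * w k) i (Finset.mem_univ i)
        (fun k _ hk => show U j k * w k = 0 by rw [hwk k hk, mul_zero])
    rw [← hvU]
    simpa [Matrix.mulVec, dotProduct] using h2
  -- column norm of U
  have hcol : ∑ j, ‖U j i‖ ^ 2 = 1 := by
    have h1 : ((star U * U) i i) = 1 := by rw [hU']; simp [Matrix.one_apply]
    rw [Matrix.mul_apply] at h1
    have h2 : ∀ j : Fin (n+1), (star U) i j * U j i = ((‖U j i‖ ^ 2 : ℝ) : ℂ) := by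
      intro j
      rw [Matrix.star_apply, Complex.star_def, mul_comm, Complex.mul_conj']
      norm_cast
    rw [Finset.sum_congr rfl (fun j _ => h2 j)] at h1
    exact_mod_cast h1
  have hwi : ‖w i‖ ^ 2 = 1 := by
    have h3 : ∑ j, ‖v j‖ ^ 2 = ‖w i‖ ^ 2 * ∑ j, ‖U j i‖ ^ 2 := by
      rw [Finset.mul_sum]
      refine Finset.sum_congr rfl fun j _ => ?_
      rw [hvj j, norm_mul, mul_pow]; ring
    rw [hnorm, hcol, mul_one] at h3
    exact h3.symm
  have hv0 : ‖v 0‖ ^ 2 = ‖U 0 i‖ ^ 2 := by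
    rw [hvj 0, norm_mul, mul_pow, hwi, mul_one]
  -- adjugate identity
  set B : Matrix (Fin (n+1)) (Fin (n+1)) ℂ := lam • 1 - A with hB
  set C : Matrix (Fin (n+1)) (Fin (n+1)) ℂ :=
    diagonal (fun k => lam - (μ k : ℂ)) with hC
  have hBUC : B = U * C * star U := by
    rw [hB, conj_smul_one_sub A hA lam, smul_one_sub_diag, ← hμ, ← hUdef, ← hC]
  set p : Fin (n+1) → ℂ := fun j => ∏ k ∈ Finset.univ.erase j, (lam - (μ k : ℂ)) with hp
  have hadjC : adjugate C = diagonal p := by rw [hC, adjugate_diagonal]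
  have hpj : ∀ j, j ≠ i → p j = 0 := by
    intro j hj
    rw [hp]
    refine Finset.prod_eq_zero (Finset.mem_erase.mpr ⟨hj.symm, Finset.mem_univ i⟩) ?_
    rw [hlam, sub_self]
  have hpi : p i = (den : ℂ) := by
    rw [hp, hden, Complex.ofReal_prod]
    exact Finset.prod_congr rfl fun k _ => by rw [hlam]; push_cast; ring
  have hdetU_unit : IsUnit (det U) :=
    IsUnit.of_mul_eq_one _ (by rw [mul_comm] at hdet1; exact hdet1)
  have hdetsU_unit : IsUnit (det (star U)) := IsUnit.of_mul_eq_one _ hdet1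
  have hUinv : U⁻¹ = star U := Matrix.inv_eq_right_inv hU
  have hsUinv : (star U)⁻¹ = U := Matrix.inv_eq_right_inv hU'
  have hadjU : adjugate U = det U • star U := by
    have h := congrArg (fun X => U⁻¹ * X) (Matrix.mul_adjugate U)
    rw [← Matrix.mul_assoc, Matrix.nonsing_inv_mul U hdetU_unit, Matrix.one_mul,
      Matrix.mul_smul, Matrix.mul_one] at h
    rw [h, hUinv]
  have hadjsU : adjugate (star U) = det (star U) • U := by
    have h := congrArg (fun X => (star U)⁻¹ * X) (Matrix.mul_adjugate (star U))
    rw [← Matrix.mul_assoc, Matrix.nonsing_inv_mul (star U) hdetsU_unit, Matrix.one_mul,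
      Matrix.mul_smul, Matrix.mul_one] at h
    rw [h, hsUinv]
  have hadjB : adjugate B = adjugate (star U) * (adjugate C * adjugate U) := by
    rw [hBUC, Matrix.adjugate_mul_distrib, Matrix.adjugate_mul_distrib]
  have hentry : adjugate B 0 0 = (den : ℂ) * ((‖U 0 i‖ ^ 2 : ℝ) : ℂ) := by
    rw [hadjB, Matrix.mul_apply]
    have hterm : ∀ j, adjugate (star U) 0 j * (adjugate C * adjugate U) j 0
        = adjugate (star U) 0 j * (p j * adjugate U j 0) := by
      intro j
      rw [hadjC, Matrix.diagonal_mul]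
    rw [Finset.sum_congr rfl fun j _ => hterm j]
    rw [Finset.sum_eq_single_of_mem i (Finset.mem_univ i)
      (fun j _ hj => by rw [hpj j hj, zero_mul, mul_zero])]
    rw [hadjU, hadjsU, hpi, Matrix.smul_apply, Matrix.smul_apply, Matrix.star_apply,
      Complex.star_def]
    have hc : (starRingEnd ℂ) (U 0 i) * U 0 i = ((‖U 0 i‖ ^ 2 : ℝ) : ℂ) := by
      rw [mul_comm, Complex.mul_conj']; norm_cast
    calc det (star U) • U 0 i * ((den : ℂ) * (det U • (starRingEnd ℂ) (U 0 i)))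
        = (det (star U) * det U) * ((den : ℂ) * ((starRingEnd ℂ) (U 0 i) * U 0 i)) := by
          simp only [smul_eq_mul]; ring
      _ = (den : ℂ) * ((‖U 0 i‖ ^ 2 : ℝ) : ℂ) := by rw [hdet1, hc, one_mul]
  have hminor : adjugate B 0 0 = (num : ℂ) := by
    rw [Matrix.adjugate_fin_succ_eq_det_submatrix]
    have hsub : B.submatrix (Fin.succAbove 0) (Fin.succAbove 0)
        = lam • 1 - A.submatrix Fin.succ Fin.succ := by
      ext j k
      rcases eq_or_ne j k with h | h
      · subst h
        simp [Fin.succAbove_zero, Matrix.submatrix_apply, Matrix.one_apply, hB]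
      · have hne : Fin.succ j ≠ Fin.succ k := fun hc => h (Fin.succ_injective n hc)
        simp [Fin.succAbove_zero, Matrix.submatrix_apply, Matrix.one_apply, h, hne, hB]
    rw [hsub, det_smul_one_sub _ (hA.submatrix Fin.succ) lam, hnum, Complex.ofReal_prod]
    simp only [Fin.val_zero, add_zero, pow_zero, one_mul]
    exact Finset.prod_congr rfl fun k _ => by rw [hlam]; push_cast; ring
  have hkey : den * ‖U 0 i‖ ^ 2 = num := by
    have h := hminor ▸ hentry
    exact_mod_cast h.symm
  have hmain : ‖v 0‖ ^ 2 = num / den := by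
    rw [hv0, eq_div_iff hden0, mul_comm, hkey]
  refine ⟨hmain, ?_⟩
  intro h0
  rw [h0] at hmain
  have hz : (0 : ℝ) = num / den := by simpa using hmain
  exact hnum0 ((div_eq_zero_iff.mp hz.symm).resolve_right hden0)
end

section
/- Let A be an n×n Hermitian matrix and M its principal submatrix obtained by deleting the first row and first column. If all n eigenvalues of A are simple and v_i denotes the first coordinate of a unit eigenvector for λ_i(A), then the characteristic polynomial of M satisfies det(M − λI) = Σ_{i=1}^n |v_i|² ∏_{k≠i} (λ_k(A) − λ) for all λ ∈ ℂ. -/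
open Matrix Finset

private lemma stmt8_ortho (n : ℕ) (A : Matrix (Fin (n + 1)) (Fin (n + 1)) ℂ)
    (hA : A.IsHermitian)
    (hdist : Function.Injective hA.eigenvalues)
    (v : Fin (n + 1) → Fin (n + 1) → ℂ)
    (hnorm : ∀ i, ∑ j, ‖v i j‖ ^ 2 = 1)
    (hv : ∀ i, A.mulVec (v i) = (hA.eigenvalues i : ℂ) • v i) :
    ∀ i j, star (v i) ⬝ᵥ v j = if i = j then 1 else 0 := by
  intro i j
  by_cases hij : i = j
  · subst hij
    simp only [if_pos rfl, dotProduct, Pi.star_apply]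
    have h1 : ∀ k, star (v i k) * v i k = ((‖v i k‖ : ℂ)) ^ 2 := by
      intro k
      exact RCLike.conj_mul (v i k)
    rw [Finset.sum_congr rfl fun k _ => h1 k]
    have : ∀ k : Fin (n + 1), ((‖v i k‖ : ℂ)) ^ 2 = ((‖v i k‖ ^ 2 : ℝ) : ℂ) := by
      intro k; push_cast; ring
    rw [Finset.sum_congr rfl fun k _ => this k, ← Complex.ofReal_sum, hnorm i,
      Complex.ofReal_one]
    simp
  · rw [if_neg hij]
    have h1 : star (v i) ⬝ᵥ A.mulVec (v j) = (hA.eigenvalues j : ℂ) * (star (v i) ⬝ᵥ v j) := by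
      rw [hv j, dotProduct_smul, smul_eq_mul]
    have h2 : star (v i) ⬝ᵥ A.mulVec (v j) = (hA.eigenvalues i : ℂ) * (star (v i) ⬝ᵥ v j) := by
      rw [dotProduct_mulVec]
      have : star (v i) ᵥ* A = (hA.eigenvalues i : ℂ) • star (v i) := by
        have := congrArg star (hv i)
        rw [star_mulVec, hA.eq] at this
        rw [this, star_smul]
        congr 1
        simp [RCLike.star_def, Complex.conj_ofReal]
      rw [this, smul_dotProduct, smul_eq_mul]
    have h3 : ((hA.eigenvalues j : ℂ) - (hA.eigenvalues i : ℂ)) * (star (v i) ⬝ᵥ v j) = 0 := by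
      rw [sub_mul, ← h1, ← h2, sub_self]
    rcases mul_eq_zero.mp h3 with h | h
    · exfalso
      apply hij
      apply hdist
      have : (hA.eigenvalues j : ℂ) = (hA.eigenvalues i : ℂ) := by linear_combination h
      exact_mod_cast this.symm
    · exact h

theorem stmt_8 (n : ℕ) (A : Matrix (Fin (n + 1)) (Fin (n + 1)) ℂ)
    (hA : A.IsHermitian)
    (hdist : Function.Injective hA.eigenvalues)
    (v : Fin (n + 1) → Fin (n + 1) → ℂ)
    (hnorm : ∀ i, ∑ j, ‖v i j‖ ^ 2 = 1)
    (hv : ∀ i, A.mulVec (v i) = (hA.eigenvalues i : ℂ) • v i) :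
    ∀ lam : ℂ,
      (A.submatrix Fin.succ Fin.succ - lam • 1).det
        = ∑ i, (‖v i 0‖ ^ 2 : ℂ)
            * ∏ k ∈ Finset.univ.erase i, ((hA.eigenvalues k : ℂ) - lam) := by
  classical
  set μ : Fin (n + 1) → ℂ := fun i => (hA.eigenvalues i : ℂ) with hμ
  have ortho := stmt8_ortho n A hA hdist v hnorm hv
  set V : Matrix (Fin (n + 1)) (Fin (n + 1)) ℂ := Matrix.of fun j i => v i j with hV
  have hVV : Vᴴ * V = 1 := by
    ext i j
    have := ortho i j
    simp only [Matrix.mul_apply, conjTranspose_apply, hV, Matrix.of_apply, Matrix.one_apply]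
    simpa [dotProduct] using this
  have hVV' : V * Vᴴ = 1 := mul_eq_one_comm.mp hVV
  have hAV : A * V = V * Matrix.diagonal μ := by
    ext k i
    have h : ∑ x, A k x * v i x = μ i * v i k := by
      have := congrFun (hv i) k
      simpa [Matrix.mulVec, dotProduct] using this
    rw [Matrix.mul_apply, Matrix.mul_diagonal]
    simp only [hV, Matrix.of_apply]
    rw [h]
    exact mul_comm _ _
  have hAdecomp : A = V * Matrix.diagonal μ * Vᴴ := by
    calc A = A * (V * Vᴴ) := by rw [hVV', mul_one]
    _ = (A * V) * Vᴴ := by rw [mul_assoc]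
    _ = V * Matrix.diagonal μ * Vᴴ := by rw [hAV]
  -- key pointwise identity off the eigenvalues
  have key : ∀ lam : ℂ, (∀ k, μ k ≠ lam) →
      (A.submatrix Fin.succ Fin.succ - lam • 1).det
        = ∑ i, (‖v i 0‖ ^ 2 : ℂ)
            * ∏ k ∈ Finset.univ.erase i, (μ k - lam) := by
    intro lam hlam
    set B : Matrix (Fin (n + 1)) (Fin (n + 1)) ℂ := A - lam • 1 with hB
    have hBdecomp : B = V * Matrix.diagonal (fun k => μ k - lam) * Vᴴ := by
      have hdiag : Matrix.diagonal (fun k => μ k - lam)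
          = Matrix.diagonal μ - lam • (1 : Matrix (Fin (n+1)) (Fin (n+1)) ℂ) := by
        rw [smul_one_eq_diagonal, ← Matrix.diagonal_sub]
      rw [hB, hdiag, Matrix.mul_sub, Matrix.sub_mul, hAdecomp]
      congr 1
      rw [Matrix.mul_smul, Matrix.smul_mul, mul_one, hVV']
    have hdetB : B.det = ∏ k, (μ k - lam) := by
      rw [hBdecomp, Matrix.det_mul, Matrix.det_mul]
      rw [mul_comm, ← mul_assoc, ← Matrix.det_mul, hVV, Matrix.det_one, one_mul,
        Matrix.det_diagonal]
    set E : Matrix (Fin (n + 1)) (Fin (n + 1)) ℂ :=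
      Matrix.diagonal (fun k => (μ k - lam)⁻¹) with hE
    set Binv : Matrix (Fin (n + 1)) (Fin (n + 1)) ℂ := V * E * Vᴴ with hBinv
    have hsub : ∀ k, μ k - lam ≠ 0 := fun k => sub_ne_zero_of_ne (hlam k)
    have hDE : Matrix.diagonal (fun k => μ k - lam) * E = 1 := by
      rw [hE, Matrix.diagonal_mul_diagonal]
      have : (fun k => (μ k - lam) * (μ k - lam)⁻¹) = fun _ => (1 : ℂ) := by
        funext k; exact mul_inv_cancel₀ (hsub k)
      rw [this, Matrix.diagonal_one]
    have hBBinv : B * Binv = 1 := by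
      rw [hBdecomp, hBinv]
      simp only [Matrix.mul_assoc]
      rw [← Matrix.mul_assoc Vᴴ V, hVV, Matrix.one_mul,
        ← Matrix.mul_assoc (Matrix.diagonal fun k => μ k - lam) E, hDE, Matrix.one_mul, hVV']
    have hBinvB : Binv * B = 1 := mul_eq_one_comm.mp hBBinv
    have hadj : B.adjugate = B.det • Binv := by
      have h1 : B * B.adjugate = B.det • 1 := Matrix.mul_adjugate B
      calc B.adjugate = (Binv * B) * B.adjugate := by rw [hBinvB, one_mul]
        _ = Binv * (B * B.adjugate) := by rw [mul_assoc]
        _ = Binv * (B.det • 1) := by rw [h1]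
        _ = B.det • Binv := by rw [Matrix.mul_smul, mul_one]
    have hsubm : A.submatrix Fin.succ Fin.succ - lam • 1 = B.submatrix Fin.succ Fin.succ := by
      ext i j
      simp only [hB, Matrix.sub_apply, Matrix.submatrix_apply, Matrix.smul_apply,
        Matrix.one_apply, Fin.succ_inj, smul_eq_mul]
    have hLHS : (A.submatrix Fin.succ Fin.succ - lam • 1).det = B.adjugate 0 0 := by
      rw [hsubm, Matrix.adjugate_apply]
      rw [Matrix.det_succ_row_zero]
      rw [Fintype.sum_eq_single (0 : Fin (n + 1))]
      · have h0 : (B.updateRow 0 (Pi.single 0 1)) 0 0 = 1 := by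
          simp [Matrix.updateRow_apply]
        rw [h0]
        have h1 : (B.updateRow 0 (Pi.single 0 1)).submatrix Fin.succ ((0 : Fin (n+1)).succAbove)
            = B.submatrix Fin.succ Fin.succ := by
          ext i j
          simp [Matrix.submatrix_apply, Fin.succAbove_zero, Matrix.updateRow_apply,
            Fin.succ_ne_zero]
        rw [h1]
        simp
      · intro j hj
        have : (B.updateRow 0 (Pi.single 0 1)) 0 j = 0 := by
          simp [Matrix.updateRow_apply, Pi.single_apply, hj]
        rw [this]
        ring
    rw [hLHS, hadj]
    have hBinv00 : Binv 0 0 = ∑ i, (μ i - lam)⁻¹ * ((‖v i 0‖ : ℂ)) ^ 2 := by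
      rw [hBinv, Matrix.mul_apply]
      apply Finset.sum_congr rfl
      intro i _
      rw [hE, Matrix.mul_diagonal, conjTranspose_apply]
      simp only [hV, Matrix.of_apply]
      have : star (v i 0) * v i 0 = ((‖v i 0‖ : ℂ)) ^ 2 := RCLike.conj_mul (v i 0)
      calc v i 0 * (μ i - lam)⁻¹ * star (v i 0)
          = (μ i - lam)⁻¹ * (star (v i 0) * v i 0) := by ring
        _ = (μ i - lam)⁻¹ * ((‖v i 0‖ : ℂ)) ^ 2 := by rw [this]
    rw [Matrix.smul_apply, hBinv00, smul_eq_mul, hdetB, Finset.mul_sum]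
    apply Finset.sum_congr rfl
    intro i _
    rw [← Finset.mul_prod_erase univ _ (Finset.mem_univ i)]
    field_simp [hsub i]
  -- extend by continuity
  intro lam
  have hcontL : Continuous fun lam : ℂ => (A.submatrix Fin.succ Fin.succ - lam • 1).det := by
    apply Continuous.matrix_det
    apply Continuous.sub continuous_const
    exact continuous_id.smul continuous_const
  have hcontR : Continuous fun lam : ℂ =>
      ∑ i, (‖v i 0‖ ^ 2 : ℂ) * ∏ k ∈ Finset.univ.erase i, (μ k - lam) := by
    apply continuous_finset_sum
    intro i _
    apply Continuous.mul continuous_const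
    apply continuous_finset_prod
    intro k _
    exact continuous_const.sub continuous_id
  have hdense : Dense {lam : ℂ | ∀ k, μ k ≠ lam} := by
    have hfin : (Set.range μ).Countable := (Set.finite_range μ).countable
    have := Set.Countable.dense_compl ℂ hfin
    convert this using 1
    ext x
    simp [Set.mem_compl_iff, Set.mem_range, not_exists, eq_comm]
  have := Continuous.ext_on hdense hcontL hcontR (fun x hx => key x hx)
  exact congrFun this lam
end

section
/- Let A be an n×n Hermitian matrix, j ∈ {1,…,n}, and M_j the (n−1)×(n−1) matrix obtained by deleting the j-th row and j-th column of A. Let v_{i,j} denote the j-th coordinate of a unit eigenvector of A for eigenvalue λ_i(A). Then |v_{i,j}|² · ∏_{k≠i}(λ_i(A) − λ_k(A)) = ∏_{k=1}^{n−1}(λ_i(A) − λ_k(M_j)). -/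
open Matrix Finset

section Aux

variable {m : Type*} [Fintype m] [DecidableEq m]

lemma aux_conj_eq (M : Matrix m m ℂ) (hM : M.IsHermitian) (c : ℝ) :
    (c : ℂ) • (1 : Matrix m m ℂ) - M =
      (hM.eigenvectorUnitary : Matrix m m ℂ) *
        diagonal (fun k => (c : ℂ) - hM.eigenvalues k) *
        star (hM.eigenvectorUnitary : Matrix m m ℂ) := by
  set U : Matrix m m ℂ := (hM.eigenvectorUnitary : Matrix m m ℂ) with hU
  have hU1 : U * star U = 1 := mem_unitaryGroup_iff.mp hM.eigenvectorUnitary.2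
  have hdiag : diagonal (fun k => (c : ℂ) - hM.eigenvalues k)
      = (c : ℂ) • (1 : Matrix m m ℂ) - diagonal (fun k => (hM.eigenvalues k : ℂ)) := by
    rw [smul_one_eq_diagonal, ← diagonal_sub]
  have hspec : M = U * diagonal (fun k => (hM.eigenvalues k : ℂ)) * star U := by
    convert hM.spectral_theorem using 3
    rfl
  rw [hdiag, Matrix.mul_sub, Matrix.sub_mul, Matrix.mul_smul, mul_one, Matrix.smul_mul, hU1,
    ← hspec]

lemma aux_det_eq (M : Matrix m m ℂ) (hM : M.IsHermitian) (c : ℝ) :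
    ((c : ℂ) • (1 : Matrix m m ℂ) - M).det = ∏ k, ((c : ℂ) - hM.eigenvalues k) := by
  set U : Matrix m m ℂ := (hM.eigenvectorUnitary : Matrix m m ℂ) with hU
  have hU2 : star U * U = 1 := mem_unitaryGroup_iff'.mp hM.eigenvectorUnitary.2
  have hdet : det (star U) * det U = 1 := by rw [← det_mul, hU2, det_one]
  rw [aux_conj_eq M hM c, det_mul, det_mul, det_diagonal, mul_comm, ← mul_assoc, hdet, one_mul]

lemma aux_adjugate_eq (M : Matrix m m ℂ) (hM : M.IsHermitian) (c : ℝ) :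
    adjugate ((c : ℂ) • (1 : Matrix m m ℂ) - M) =
      (hM.eigenvectorUnitary : Matrix m m ℂ) *
        diagonal (fun l => ∏ k ∈ Finset.univ.erase l, ((c : ℂ) - hM.eigenvalues k)) *
        star (hM.eigenvectorUnitary : Matrix m m ℂ) := by
  set U : Matrix m m ℂ := (hM.eigenvectorUnitary : Matrix m m ℂ) with hU
  have hU1 : U * star U = 1 := mem_unitaryGroup_iff.mp hM.eigenvectorUnitary.2
  have hU2 : star U * U = 1 := mem_unitaryGroup_iff'.mp hM.eigenvectorUnitary.2
  have hdet : det (star U) * det U = 1 := by rw [← det_mul, hU2, det_one]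
  have hdet1 : det U * det (star U) = 1 := by rw [← det_mul, hU1, det_one]
  have hadjU : adjugate U = det U • star U := by
    calc adjugate U = adjugate U * (U * star U) := by rw [hU1, mul_one]
    _ = (adjugate U * U) * star U := by rw [mul_assoc]
    _ = det U • star U := by rw [adjugate_mul, Matrix.smul_mul, one_mul]
  have hadjsU : adjugate (star U) = det (star U) • U := by
    calc adjugate (star U) = adjugate (star U) * (star U * U) := by rw [hU2, mul_one]
    _ = (adjugate (star U) * star U) * U := by rw [mul_assoc]
    _ = det (star U) • U := by rw [adjugate_mul, Matrix.smul_mul, one_mul]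
  rw [aux_conj_eq M hM c, adjugate_mul_distrib, adjugate_mul_distrib, adjugate_diagonal,
    hadjU, hadjsU]
  simp only [Matrix.smul_mul, Matrix.mul_smul, smul_smul, hdet, hdet1, one_smul, mul_assoc]

end Aux

theorem stmt_10 (n : ℕ) (A : Matrix (Fin (n + 1)) (Fin (n + 1)) ℂ)
    (hA : A.IsHermitian) (j : Fin (n + 1)) (i : Fin (n + 1))
    (v : Fin (n + 1) → ℂ)
    (hnorm : ∑ l, ‖v l‖ ^ 2 = 1)
    (hv : A.mulVec v = (hA.eigenvalues i : ℂ) • v) :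
    ‖v j‖ ^ 2 * ∏ k ∈ Finset.univ.erase i, (hA.eigenvalues i - hA.eigenvalues k)
      = ∏ k : Fin n,
          (hA.eigenvalues i - (hA.submatrix j.succAbove).eigenvalues k) := by
  classical
  set c : ℝ := hA.eigenvalues i with hc
  set U : Matrix (Fin (n + 1)) (Fin (n + 1)) ℂ := (hA.eigenvectorUnitary : Matrix (Fin (n + 1)) (Fin (n + 1)) ℂ)
    with hUdef
  have hU1 : U * star U = 1 := mem_unitaryGroup_iff.mp hA.eigenvectorUnitary.2
  have hU2 : star U * U = 1 := mem_unitaryGroup_iff'.mp hA.eigenvectorUnitary.2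
  set B : Matrix (Fin (n + 1)) (Fin (n + 1)) ℂ := (c : ℂ) • 1 - A with hBdef
  -- the diagonal entry of the adjugate, computed two ways
  have hentry : adjugate B j j
      = (‖U j i‖ ^ 2 : ℝ) * ∏ k ∈ Finset.univ.erase i, ((c : ℂ) - hA.eigenvalues k) := by
    rw [hBdef, aux_adjugate_eq A hA c]
    have : ((hA.eigenvectorUnitary : Matrix (Fin (n + 1)) (Fin (n + 1)) ℂ) *
        diagonal (fun l => ∏ k ∈ Finset.univ.erase l, ((c : ℂ) - hA.eigenvalues k)) *
        star (hA.eigenvectorUnitary : Matrix (Fin (n + 1)) (Fin (n + 1)) ℂ)) j j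
        = ∑ l, U j l * (∏ k ∈ Finset.univ.erase l, ((c : ℂ) - hA.eigenvalues k))
            * star (U j l) := by
      rw [Matrix.mul_apply]
      refine Finset.sum_congr rfl fun l _ => ?_
      rw [Matrix.mul_diagonal, Matrix.star_apply, ← hUdef]
    rw [this, Fintype.sum_eq_single i]
    · have hzero : (c : ℂ) - hA.eigenvalues i = 0 := by
        rw [hc]; simp
      rw [mul_comm (U j i) _, mul_assoc, RCLike.star_def, Complex.mul_conj,
        Complex.normSq_eq_norm_sq]
      push_cast
      ring
    · intro l hl
      have hi : i ∈ Finset.univ.erase l := Finset.mem_erase.mpr ⟨(Ne.symm hl), Finset.mem_univ i⟩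
      rw [Finset.prod_eq_zero hi (by rw [hc]; simp), mul_zero, zero_mul]
  have hentry2 : adjugate B j j
      = ((∏ k : Fin n, (c - (hA.submatrix j.succAbove).eigenvalues k) : ℝ) : ℂ) := by
    rw [adjugate_fin_succ_eq_det_submatrix]
    have hsub : B.submatrix j.succAbove j.succAbove
        = (c : ℂ) • 1 - A.submatrix j.succAbove j.succAbove := by
      ext a b
      by_cases hab : a = b <;>
        simp [hBdef, Matrix.one_apply, Fin.succAbove_right_injective.eq_iff, hab]
    rw [hsub, aux_det_eq _ (hA.submatrix j.succAbove) c]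
    rw [← two_mul, pow_mul, neg_one_sq, one_pow, one_mul]
    push_cast
    rfl
  -- case split on whether the eigenvalue is simple
  by_cases hP : ∏ k ∈ Finset.univ.erase i, (c - hA.eigenvalues k) = 0
  · have hPC : ∏ k ∈ Finset.univ.erase i, ((c : ℂ) - hA.eigenvalues k) = 0 := by
      have : (((∏ k ∈ Finset.univ.erase i, (c - hA.eigenvalues k)) : ℝ) : ℂ) = 0 := by
        rw [hP]; simp
      rw [← this]; push_cast; rfl
    have hQ : ((∏ k : Fin n, (c - (hA.submatrix j.succAbove).eigenvalues k) : ℝ) : ℂ) = 0 := by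
      rw [← hentry2, hentry, hPC, mul_zero]
    rw [hP, mul_zero]
    exact_mod_cast hQ.symm
  · -- simple eigenvalue: show ‖v j‖ = ‖U j i‖
    have hne : ∀ k, k ≠ i → hA.eigenvalues k ≠ c := by
      intro k hk heq
      exact hP (Finset.prod_eq_zero (Finset.mem_erase.mpr ⟨hk, Finset.mem_univ k⟩)
        (by rw [heq, sub_self]))
    set D : Matrix (Fin (n + 1)) (Fin (n + 1)) ℂ :=
      diagonal (fun k => (hA.eigenvalues k : ℂ)) with hDdef
    have hspec : A = U * D * star U := by
      rw [hUdef, hDdef]; convert hA.spectral_theorem using 3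
      rfl
    have hAU : A * U = U * D := by
      rw [hspec, mul_assoc, mul_assoc, hU2, mul_one]
    obtain ⟨w, hvw⟩ : ∃ w, v = U *ᵥ w :=
      ⟨star U *ᵥ v, by rw [mulVec_mulVec, hU1, one_mulVec]⟩
    have hUinj : ∀ x y : Fin (n + 1) → ℂ, U *ᵥ x = U *ᵥ y → x = y := by
      intro x y h
      have h' := congrArg (fun z => star U *ᵥ z) h
      simpa [mulVec_mulVec, hU2, one_mulVec] using h'
    have hDw : D *ᵥ w = (c : ℂ) • w := by
      have h1 : U *ᵥ (D *ᵥ w) = U *ᵥ ((c : ℂ) • w) := by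
        calc U *ᵥ (D *ᵥ w) = (U * D) *ᵥ w := by rw [mulVec_mulVec]
        _ = (A * U) *ᵥ w := by rw [hAU]
        _ = A *ᵥ (U *ᵥ w) := by rw [mulVec_mulVec]
        _ = (c : ℂ) • v := by rw [← hvw]; exact hv
        _ = U *ᵥ ((c : ℂ) • w) := by rw [hvw, mulVec_smul]
      exact hUinj _ _ h1
    have hwk : ∀ k, k ≠ i → w k = 0 := by
      intro k hk
      have h3 : (hA.eigenvalues k : ℂ) * w k = (c : ℂ) * w k := by
        have := congrFun hDw k
        rwa [hDdef, mulVec_diagonal] at this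
      have h4 : ((hA.eigenvalues k : ℂ) - (c : ℂ)) * w k = 0 := by
        rw [sub_mul, h3, sub_self]
      rcases mul_eq_zero.mp h4 with h | h
      · exact absurd (by exact_mod_cast sub_eq_zero.mp h) (hne k hk)
      · exact h
    have hvj : v j = U j i * w i := by
      rw [hvw]
      rw [show (U *ᵥ w) j = ∑ l, U j l * w l from rfl]
      rw [Fintype.sum_eq_single i]
      intro l hl
      rw [hwk l hl, mul_zero]
    have hcol : ∑ l, ‖U l i‖ ^ 2 = 1 := by
      have h5 : (star U * U) i i = 1 := by rw [hU2]; simp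
      have h6 : (star U * U) i i = ∑ l, ((‖U l i‖ : ℂ)) ^ 2 := by
        rw [Matrix.mul_apply]
        refine Finset.sum_congr rfl fun l _ => ?_
        rw [Matrix.star_apply, RCLike.star_def, mul_comm, Complex.mul_conj,
          Complex.normSq_eq_norm_sq]
        push_cast
        ring
      rw [h6] at h5
      have : ((∑ l, ‖U l i‖ ^ 2 : ℝ) : ℂ) = 1 := by push_cast at h5 ⊢; exact h5
      exact_mod_cast this
    have hwi : ‖w i‖ ^ 2 = 1 := by
      have h7 : ∑ l, ‖v l‖ ^ 2 = ‖w i‖ ^ 2 * ∑ l, ‖U l i‖ ^ 2 := by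
        rw [Finset.mul_sum]
        refine Finset.sum_congr rfl fun l _ => ?_
        have : v l = U l i * w i := by
          rw [hvw]
          rw [show (U *ᵥ w) l = ∑ r, U l r * w r from rfl]
          rw [Fintype.sum_eq_single i]
          intro r hr
          rw [hwk r hr, mul_zero]
        rw [this, norm_mul, mul_pow]
        ring
      rw [hcol, mul_one] at h7
      rw [← h7, hnorm]
    have hnorm_eq : ‖v j‖ ^ 2 = ‖U j i‖ ^ 2 := by
      rw [hvj, norm_mul, mul_pow, hwi, mul_one]
    -- conclude via casting to ℂ
    have hfinal : ((‖v j‖ ^ 2 * ∏ k ∈ Finset.univ.erase i, (c - hA.eigenvalues k) : ℝ) : ℂ)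
        = ((∏ k : Fin n, (c - (hA.submatrix j.succAbove).eigenvalues k) : ℝ) : ℂ) := by
      rw [← hentry2, hentry, hnorm_eq]
      push_cast
      rfl
    exact_mod_cast hfinal
end
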